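/- For n ≥ 1, k ≥ 1 and j ∈ {0,...,n}, let a_j(C_n×C_k) be the sum, over all down-sets D of the product poset C_n×C_k with D ∩ (C_n×{k}) = {1,...,j}×{k}, of the number of down-sets E of C_n×C_k with E ⊆ D (for n = 0, C_0×C_k is the empty poset and a_0(C_0×C_k) = 1). Then for all n ≥ 1 and k ≥ 2: a_0(C_n×C_k) = h(C_n×C_{k−1}); a_j(C_n×C_k) = a_{j−1}(C_{n−1}×C_k) + Σ_{i=j}^{n} a_i(C_n×C_{k−1}) for every j ∈ {1,...,n}; and h(C_n×C_k) = h(C_{n−1}×C_k) + Σ_{i=0}^{n} (i+1) · a_i(C_n×C_{k−1}). -/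

import Mathlib

attribute [local instance] Classical.propDecidable

/-- The down-sets of the product poset `C_n × C_k` (componentwise order on
`Fin n × Fin k`), as finite sets. -/
noncomputable def dsCC (n k : ℕ) : Finset (Finset (Fin n × Fin k)) :=
  Finset.univ.filter fun D => ∀ a b : Fin n × Fin k, a ≤ b → b ∈ D → a ∈ D

/-- `a_j(C_n×C_k)`: the sum, over all down-sets `D` of `C_n × C_k` with
`D ∩ (C_n×{k}) = {1,…,j}×{k}`, of the number of down-sets `E` of `C_n × C_k`
with `E ⊆ D` (for `n = 0` this gives `a_0(C_0×C_k) = 1`). -/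
noncomputable def aCC (n k j : ℕ) : ℕ :=
  ∑ D ∈ (dsCC n k).filter (fun D =>
      D.filter (fun p => (p.2 : ℕ) = k - 1)
        = Finset.univ.filter fun p : Fin n × Fin k =>
            (p.1 : ℕ) < j ∧ (p.2 : ℕ) = k - 1),
    ((dsCC n k).filter fun E => E ⊆ D).card

open Finset

-- down-closed subset of Fin n is an initial segment
lemma fin_downset_iff {n : ℕ} (S : Finset (Fin n))
    (hS : ∀ a b : Fin n, a ≤ b → b ∈ S → a ∈ S) (i : Fin n) :
    i ∈ S ↔ (i : ℕ) < S.card := by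
  constructor
  · intro hi
    have h1 : Finset.Iic i ⊆ S := fun a ha => hS a i (Finset.mem_Iic.mp ha) hi
    have := Finset.card_le_card h1
    rw [Fin.card_Iic] at this
    omega
  · intro hlt
    by_contra hi
    have h2 : S ⊆ Finset.Iio i := by
      intro b hb
      rw [Finset.mem_Iio]
      by_contra hbi
      exact hi (hS i b (le_of_not_gt hbi) hb)
    have := Finset.card_le_card h2
    rw [Fin.card_Iio] at this
    omega

lemma card_filter_val_lt {n m : ℕ} (h : m ≤ n) :
    (univ.filter fun i : Fin n => (i : ℕ) < m).card = m := by
  rcases eq_or_lt_of_le h with rfl | hlt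
  · rw [filter_true_of_mem (fun i _ => i.isLt)]
    simp
  · have he : (univ.filter fun i : Fin n => (i : ℕ) < m) = Finset.Iio ⟨m, hlt⟩ := by
      ext i; simp [Fin.lt_def]
    rw [he, Fin.card_Iio]

noncomputable def rowLen {n k : ℕ} (D : Finset (Fin n × Fin k)) (l : Fin k) : Fin (n + 1) :=
  ⟨(univ.filter fun i : Fin n => (i, l) ∈ D).card,
    Nat.lt_succ_of_le ((Finset.card_filter_le _ _).trans (by simp))⟩

lemma mem_dsCC {n k : ℕ} {D : Finset (Fin n × Fin k)} :
    D ∈ dsCC n k ↔ ∀ a b : Fin n × Fin k, a ≤ b → b ∈ D → a ∈ D := by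
  unfold dsCC
  rw [Finset.mem_filter]
  simp only [Finset.mem_univ, true_and]

lemma rowLen_spec {n k : ℕ} {D : Finset (Fin n × Fin k)} (hD : D ∈ dsCC n k)
    (i : Fin n) (l : Fin k) : (i, l) ∈ D ↔ (i : ℕ) < rowLen D l := by
  rw [mem_dsCC] at hD
  have h := fin_downset_iff (univ.filter fun i : Fin n => (i, l) ∈ D)
    (fun a b hab hb => by
      simp only [Finset.mem_filter, Finset.mem_univ, true_and] at hb ⊢
      exact hD (a, l) (b, l) ⟨hab, le_refl l⟩ hb) i
  simpa [rowLen] using h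

lemma rowLen_antitone {n k : ℕ} {D : Finset (Fin n × Fin k)} (hD : D ∈ dsCC n k) :
    Antitone (rowLen D) := by
  rw [mem_dsCC] at hD
  intro l l' hll
  show (univ.filter fun i : Fin n => (i, l') ∈ D).card ≤ (univ.filter fun i : Fin n => (i, l) ∈ D).card
  exact Finset.card_le_card (fun i hi => by
    simp only [Finset.mem_filter, Finset.mem_univ, true_and] at hi ⊢
    exact hD (i, l) (i, l') ⟨le_refl _, hll⟩ hi)

lemma rowLen_mono {n k : ℕ} {E D : Finset (Fin n × Fin k)} (h : E ⊆ D) (l : Fin k) :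
    rowLen E l ≤ rowLen D l := by
  show (univ.filter fun i : Fin n => (i, l) ∈ E).card ≤ (univ.filter fun i : Fin n => (i, l) ∈ D).card
  exact Finset.card_le_card (fun i hi => by
    simp only [Finset.mem_filter, Finset.mem_univ, true_and] at hi ⊢
    exact h hi)

noncomputable def toDS {n k : ℕ} (r : Fin k → Fin (n + 1)) : Finset (Fin n × Fin k) :=
  univ.filter fun p => (p.1 : ℕ) < r p.2

lemma toDS_mem {n k : ℕ} {r : Fin k → Fin (n + 1)} (hr : Antitone r) :
    toDS r ∈ dsCC n k := by
  rw [mem_dsCC]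
  intro a b hab hb
  simp only [toDS, Finset.mem_filter, Finset.mem_univ, true_and] at hb ⊢
  have h1 : (a.1 : ℕ) ≤ b.1 := hab.1
  have h2 : (r b.2 : ℕ) ≤ r a.2 := hr hab.2
  omega

lemma rowLen_toDS {n k : ℕ} (r : Fin k → Fin (n + 1)) : rowLen (toDS r) = r := by
  funext l
  apply Fin.ext
  show (univ.filter fun i : Fin n => (i, l) ∈ toDS r).card = (r l : ℕ)
  have he : (univ.filter fun i : Fin n => (i, l) ∈ toDS r)
      = univ.filter fun i : Fin n => (i : ℕ) < (r l : ℕ) := by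
    ext i; simp [toDS]
  rw [he, card_filter_val_lt (by omega : (r l : ℕ) ≤ n)]

lemma toDS_rowLen {n k : ℕ} {D : Finset (Fin n × Fin k)} (hD : D ∈ dsCC n k) :
    toDS (rowLen D) = D := by
  ext ⟨i, l⟩
  simp only [toDS, Finset.mem_filter, Finset.mem_univ, true_and]
  exact (rowLen_spec hD i l).symm

lemma toDS_mono {n k : ℕ} {r r' : Fin k → Fin (n + 1)} (h : ∀ l, r l ≤ r' l) :
    toDS r ⊆ toDS r' := by
  intro p hp
  simp only [toDS, Finset.mem_filter, Finset.mem_univ, true_and] at hp ⊢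
  exact lt_of_lt_of_le hp (h p.2)

noncomputable def PF (n k : ℕ) : Finset ((Fin k → Fin (n + 1)) × (Fin k → Fin (n + 1))) :=
  univ.filter fun q => Antitone q.1 ∧ Antitone q.2 ∧ ∀ l, q.2 l ≤ q.1 l

lemma mem_PF {n k : ℕ} {q : (Fin k → Fin (n + 1)) × (Fin k → Fin (n + 1))} :
    q ∈ PF n k ↔ Antitone q.1 ∧ Antitone q.2 ∧ ∀ l, q.2 l ≤ q.1 l := by
  unfold PF
  rw [Finset.mem_filter]
  simp only [Finset.mem_univ, true_and]

lemma top_eq_iff {n m : ℕ} {D : Finset (Fin n × Fin (m + 1))} (hD : D ∈ dsCC n (m + 1))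
    {j : ℕ} (hj : j ≤ n) :
    (D.filter (fun p => (p.2 : ℕ) = (m + 1) - 1)
      = univ.filter fun p : Fin n × Fin (m + 1) => (p.1 : ℕ) < j ∧ (p.2 : ℕ) = (m + 1) - 1)
    ↔ (rowLen D (Fin.last m) : ℕ) = j := by
  constructor
  · intro h
    have key : ∀ i : Fin n, ((i : ℕ) < (rowLen D (Fin.last m) : ℕ)) ↔ (i : ℕ) < j := by
      intro i
      rw [← rowLen_spec hD i (Fin.last m)]
      have h2 := Finset.ext_iff.mp h (i, Fin.last m)
      simpa [Fin.val_last] using h2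
    have hRn : (rowLen D (Fin.last m) : ℕ) ≤ n := by
      have := (rowLen D (Fin.last m)).isLt; omega
    by_contra hne
    rcases Nat.lt_or_ge (rowLen D (Fin.last m) : ℕ) j with hlt | hge
    · have hn : (rowLen D (Fin.last m) : ℕ) < n := lt_of_lt_of_le hlt hj
      have := key ⟨_, hn⟩
      simp only at this
      omega
    · have hjlt : j < (rowLen D (Fin.last m) : ℕ) := by omega
      have := key ⟨j, by omega⟩
      simp only at this
      omega
  · intro h
    ext ⟨i, l⟩
    simp only [Finset.mem_filter, Finset.mem_univ, true_and]
    constructor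
    · rintro ⟨hmem, hl⟩
      have hlast : l = Fin.last m := Fin.ext (by simpa [Fin.val_last] using hl)
      subst hlast
      rw [rowLen_spec hD] at hmem
      exact ⟨by omega, hl⟩
    · rintro ⟨hij, hl⟩
      have hlast : l = Fin.last m := Fin.ext (by simpa [Fin.val_last] using hl)
      subst hlast
      exact ⟨(rowLen_spec hD i _).mpr (by omega), hl⟩

lemma aCC_eq_card (n m j : ℕ) (hj : j ≤ n) :
    aCC n (m + 1) j
      = ((PF n (m + 1)).filter fun q => (q.1 (Fin.last m) : ℕ) = j).card := by
  have hfc : (dsCC n (m + 1)).filter (fun D =>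
      D.filter (fun p => (p.2 : ℕ) = (m + 1) - 1)
        = Finset.univ.filter fun p : Fin n × Fin (m + 1) =>
            (p.1 : ℕ) < j ∧ (p.2 : ℕ) = (m + 1) - 1)
      = (dsCC n (m + 1)).filter (fun D => (rowLen D (Fin.last m) : ℕ) = j) :=
    Finset.filter_congr (fun D hD => top_eq_iff hD hj)
  have hsum : aCC n (m + 1) j
      = (((dsCC n (m + 1)) ×ˢ (dsCC n (m + 1))).filter
          (fun q => (rowLen q.1 (Fin.last m) : ℕ) = j ∧ q.2 ⊆ q.1)).card := by
    rw [aCC, hfc, Finset.card_filter, Finset.sum_product, Finset.sum_filter]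
    apply Finset.sum_congr rfl
    intro D _
    rw [Finset.card_filter]
    split_ifs with hC
    · apply Finset.sum_congr rfl
      intro E _
      simp [hC]
    · symm
      apply Finset.sum_eq_zero
      intro E _
      simp [hC]
  rw [hsum]
  apply Finset.card_nbij' (fun q => (rowLen q.1, rowLen q.2))
      (fun q => (toDS q.1, toDS q.2))
  · intro q hq
    simp only [Finset.mem_coe, Finset.mem_filter, Finset.mem_product] at hq
    obtain ⟨⟨h1, h2⟩, h3, h4⟩ := hq
    simp only [Finset.mem_coe, Finset.mem_filter, mem_PF]
    exact ⟨⟨rowLen_antitone h1, rowLen_antitone h2, fun l => rowLen_mono h4 l⟩, h3⟩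
  · intro q hq
    simp only [Finset.mem_coe, Finset.mem_filter, mem_PF] at hq
    obtain ⟨⟨h1, h2, h3⟩, h4⟩ := hq
    simp only [Finset.mem_coe, Finset.mem_filter, Finset.mem_product]
    refine ⟨⟨toDS_mem h1, toDS_mem h2⟩, ?_, toDS_mono h3⟩
    rw [rowLen_toDS]
    exact h4
  · intro q hq
    simp only [Finset.mem_coe, Finset.mem_filter, Finset.mem_product] at hq
    obtain ⟨⟨h1, h2⟩, _, _⟩ := hq
    have e1 := toDS_rowLen h1
    have e2 := toDS_rowLen h2
    simp only [Prod.ext_iff]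
    exact ⟨e1, e2⟩
  · intro q hq
    have e1 := rowLen_toDS q.1
    have e2 := rowLen_toDS q.2
    simp only [Prod.ext_iff]
    exact ⟨e1, e2⟩

noncomputable def homToPF {n k : ℕ} (f : (Fin n × Fin k) →o Fin 3) :
    (Fin k → Fin (n + 1)) × (Fin k → Fin (n + 1)) :=
  (fun l => ⟨(univ.filter fun i : Fin n => f (i, l) ≤ 1).card,
      Nat.lt_succ_of_le ((Finset.card_filter_le _ _).trans (by simp))⟩,
   fun l => ⟨(univ.filter fun i : Fin n => f (i, l) = 0).card,
      Nat.lt_succ_of_le ((Finset.card_filter_le _ _).trans (by simp))⟩)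

lemma hom_d_spec {n k : ℕ} (f : (Fin n × Fin k) →o Fin 3) (i : Fin n) (l : Fin k) :
    f (i, l) ≤ 1 ↔ (i : ℕ) < ((homToPF f).1 l : ℕ) := by
  have h := fin_downset_iff (univ.filter fun i : Fin n => f (i, l) ≤ 1)
    (fun a b hab hb => by
      simp only [Finset.mem_filter, Finset.mem_univ, true_and] at hb ⊢
      exact le_trans (f.monotone (show ((a, l) : Fin n × Fin k) ≤ (b, l) from ⟨hab, le_refl l⟩)) hb) i
  simpa [homToPF] using h

lemma hom_e_spec {n k : ℕ} (f : (Fin n × Fin k) →o Fin 3) (i : Fin n) (l : Fin k) :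
    f (i, l) = 0 ↔ (i : ℕ) < ((homToPF f).2 l : ℕ) := by
  have h := fin_downset_iff (univ.filter fun i : Fin n => f (i, l) = 0)
    (fun a b hab hb => by
      simp only [Finset.mem_filter, Finset.mem_univ, true_and] at hb ⊢
      have := f.monotone (show ((a, l) : Fin n × Fin k) ≤ (b, l) from ⟨hab, le_refl l⟩)
      rw [hb] at this
      exact le_antisymm this (Fin.zero_le _)) i
  simpa [homToPF] using h

lemma homToPF_mem {n k : ℕ} (f : (Fin n × Fin k) →o Fin 3) : homToPF f ∈ PF n k := by
  rw [mem_PF]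
  refine ⟨?_, ?_, ?_⟩
  · intro l l' hll
    show (univ.filter fun i : Fin n => f (i, l') ≤ 1).card ≤ (univ.filter fun i : Fin n => f (i, l) ≤ 1).card
    apply Finset.card_le_card
    intro i hi
    simp only [Finset.mem_filter, Finset.mem_univ, true_and] at hi ⊢
    exact le_trans (f.monotone (show ((i, l) : Fin n × Fin k) ≤ (i, l') from ⟨le_refl i, hll⟩)) hi
  · intro l l' hll
    show (univ.filter fun i : Fin n => f (i, l') = 0).card ≤ (univ.filter fun i : Fin n => f (i, l) = 0).card
    apply Finset.card_le_card
    intro i hi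
    simp only [Finset.mem_filter, Finset.mem_univ, true_and] at hi ⊢
    have := f.monotone (show ((i, l) : Fin n × Fin k) ≤ (i, l') from ⟨le_refl i, hll⟩)
    rw [hi] at this
    exact le_antisymm this (Fin.zero_le _)
  · intro l
    show (univ.filter fun i : Fin n => f (i, l) = 0).card ≤ (univ.filter fun i : Fin n => f (i, l) ≤ 1).card
    apply Finset.card_le_card
    intro i hi
    simp only [Finset.mem_filter, Finset.mem_univ, true_and] at hi ⊢
    rw [hi]
    decide

noncomputable def pfToHom {n k : ℕ} (q : (Fin k → Fin (n + 1)) × (Fin k → Fin (n + 1)))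
    (hq : q ∈ PF n k) : (Fin n × Fin k) →o Fin 3 where
  toFun := fun p => if (p.1 : ℕ) < (q.2 p.2 : ℕ) then 0
    else if (p.1 : ℕ) < (q.1 p.2 : ℕ) then 1 else 2
  monotone' := by
    rw [mem_PF] at hq
    intro p p' hpp
    have ha : (p.1 : ℕ) ≤ (p'.1 : ℕ) := hpp.1
    have hb : (q.1 p'.2 : ℕ) ≤ (q.1 p.2 : ℕ) := hq.1 hpp.2
    have hc : (q.2 p'.2 : ℕ) ≤ (q.2 p.2 : ℕ) := hq.2.1 hpp.2
    dsimp only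
    split_ifs <;> first | decide | omega | (exfalso; omega)

lemma pfToHom_homToPF {n k : ℕ} (f : (Fin n × Fin k) →o Fin 3) :
    pfToHom (homToPF f) (homToPF_mem f) = f := by
  apply OrderHom.ext
  funext p
  obtain ⟨i, l⟩ := p
  show (if (i : ℕ) < ((homToPF f).2 l : ℕ) then (0 : Fin 3)
    else if (i : ℕ) < ((homToPF f).1 l : ℕ) then 1 else 2) = f (i, l)
  have h0 := hom_e_spec f i l
  have h1 := hom_d_spec f i l
  have hv : (f (i, l) : ℕ) < 3 := (f (i, l)).isLt
  have hval0 : f (i, l) = 0 ↔ (f (i, l) : ℕ) = 0 := by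
    rw [Fin.ext_iff]; rfl
  have hval1 : f (i, l) ≤ 1 ↔ (f (i, l) : ℕ) ≤ 1 := by
    rw [Fin.le_def]; rfl
  rw [hval0] at h0
  rw [hval1] at h1
  split_ifs with hA hB
  · rw [Fin.ext_iff]
    show 0 = (f (i, l) : ℕ)
    omega
  · rw [Fin.ext_iff]
    show 1 = (f (i, l) : ℕ)
    omega
  · rw [Fin.ext_iff]
    show 2 = (f (i, l) : ℕ)
    omega

lemma homToPF_pfToHom {n k : ℕ} (q : (Fin k → Fin (n + 1)) × (Fin k → Fin (n + 1)))
    (hq : q ∈ PF n k) : homToPF (pfToHom q hq) = q := by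
  have hle : ∀ l, (q.2 l : ℕ) ≤ (q.1 l : ℕ) := fun l => (mem_PF.mp hq).2.2 l
  have hfd : ∀ (i : Fin n) (l : Fin k),
      pfToHom q hq (i, l) ≤ 1 ↔ (i : ℕ) < (q.1 l : ℕ) := by
    intro i l
    show (if (i : ℕ) < (q.2 l : ℕ) then (0 : Fin 3)
      else if (i : ℕ) < (q.1 l : ℕ) then 1 else 2) ≤ 1 ↔ (i : ℕ) < (q.1 l : ℕ)
    have := hle l
    split_ifs with hA hB
    · simp only [iff_true_intro (by decide : (0 : Fin 3) ≤ 1), true_iff]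
      omega
    · simp only [iff_true_intro (by decide : (1 : Fin 3) ≤ 1), true_iff]
      omega
    · simp only [iff_false_intro (by decide : ¬ (2 : Fin 3) ≤ 1), false_iff]
      omega
  have hfe : ∀ (i : Fin n) (l : Fin k),
      pfToHom q hq (i, l) = 0 ↔ (i : ℕ) < (q.2 l : ℕ) := by
    intro i l
    show (if (i : ℕ) < (q.2 l : ℕ) then (0 : Fin 3)
      else if (i : ℕ) < (q.1 l : ℕ) then 1 else 2) = 0 ↔ (i : ℕ) < (q.2 l : ℕ)
    split_ifs with hA hB
    · simpa using hA
    · simp only [iff_false_intro (by decide : ¬ (1 : Fin 3) = 0), false_iff]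
      omega
    · simp only [iff_false_intro (by decide : ¬ (2 : Fin 3) = 0), false_iff]
      omega
  have h1 : (homToPF (pfToHom q hq)).1 = q.1 := by
    funext l
    apply Fin.ext
    show (univ.filter fun i : Fin n => pfToHom q hq (i, l) ≤ 1).card = (q.1 l : ℕ)
    have he : (univ.filter fun i : Fin n => pfToHom q hq (i, l) ≤ 1)
        = univ.filter fun i : Fin n => (i : ℕ) < (q.1 l : ℕ) := by
      ext i
      simp only [Finset.mem_filter, Finset.mem_univ, true_and]
      exact hfd i l
    rw [he, card_filter_val_lt (by omega : (q.1 l : ℕ) ≤ n)]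
  have h2 : (homToPF (pfToHom q hq)).2 = q.2 := by
    funext l
    apply Fin.ext
    show (univ.filter fun i : Fin n => pfToHom q hq (i, l) = 0).card = (q.2 l : ℕ)
    have he : (univ.filter fun i : Fin n => pfToHom q hq (i, l) = 0)
        = univ.filter fun i : Fin n => (i : ℕ) < (q.2 l : ℕ) := by
      ext i
      simp only [Finset.mem_filter, Finset.mem_univ, true_and]
      exact hfe i l
    rw [he, card_filter_val_lt (by omega : (q.2 l : ℕ) ≤ n)]
  exact Prod.ext h1 h2

lemma hcard (n k : ℕ) : Nat.card ((Fin n × Fin k) →o Fin 3) = (PF n k).card := by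
  have e : ((Fin n × Fin k) →o Fin 3) ≃ {q // q ∈ PF n k} :=
    { toFun := fun f => ⟨homToPF f, homToPF_mem f⟩
      invFun := fun q => pfToHom q.1 q.2
      left_inv := fun f => pfToHom_homToPF f
      right_inv := fun q => Subtype.ext (homToPF_pfToHom q.1 q.2) }
  rw [Nat.card_congr e, Nat.card_eq_fintype_card, Fintype.card_coe]

lemma antitone_snoc {N m : ℕ} {r : Fin (m + 1) → Fin N} {c : Fin N}
    (hr : Antitone r) (hc : c ≤ r (Fin.last m)) :
    Antitone (Fin.snoc r c : Fin (m + 2) → Fin N) := by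
  intro l l' h
  rcases Fin.eq_castSucc_or_eq_last l' with ⟨l'', rfl⟩ | rfl
  · rcases Fin.eq_castSucc_or_eq_last l with ⟨l0, rfl⟩ | rfl
    · rw [Fin.snoc_castSucc, Fin.snoc_castSucc]
      exact hr (Fin.castSucc_le_castSucc_iff.mp h)
    · exact absurd h (not_le.mpr (Fin.castSucc_lt_last _))
  · rw [Fin.snoc_last]
    rcases Fin.eq_castSucc_or_eq_last l with ⟨l0, rfl⟩ | rfl
    · rw [Fin.snoc_castSucc]
      exact le_trans hc (hr (Fin.le_last _))
    · rw [Fin.snoc_last]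

lemma antitone_init {N m : ℕ} {r : Fin (m + 2) → Fin N} (hr : Antitone r) :
    Antitone (Fin.init r) := by
  intro l l' h
  exact hr (Fin.castSucc_le_castSucc_iff.mpr h)

-- M2 : partition of all pairs by the last value of d
lemma M2 (n m : ℕ) :
    (PF n (m + 1)).card
      = ∑ j ∈ Finset.range (n + 1),
          ((PF n (m + 1)).filter fun q => (q.1 (Fin.last m) : ℕ) = j).card := by
  apply Finset.card_eq_sum_card_fiberwise
  intro q _
  simp only [Finset.mem_coe, Finset.mem_range]
  exact (q.1 (Fin.last m)).isLt

-- M1 : pairs with d_last = 0 correspond to pairs on one fewer row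
lemma M1 (n m : ℕ) :
    ((PF n (m + 2)).filter fun q => (q.1 (Fin.last (m + 1)) : ℕ) = 0).card
      = (PF n (m + 1)).card := by
  apply Finset.card_nbij' (fun q => (Fin.init q.1, Fin.init q.2))
      (fun q => (Fin.snoc q.1 0, Fin.snoc q.2 0))
  · intro q hq
    simp only [Finset.mem_coe, Finset.mem_filter, mem_PF] at hq
    obtain ⟨⟨h1, h2, h3⟩, _⟩ := hq
    rw [Finset.mem_coe, mem_PF]
    exact ⟨antitone_init h1, antitone_init h2, fun l => h3 _⟩
  · intro q hq
    rw [Finset.mem_coe, mem_PF] at hq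
    obtain ⟨h1, h2, h3⟩ := hq
    simp only [Finset.mem_coe, Finset.mem_filter, mem_PF]
    refine ⟨⟨antitone_snoc h1 (Fin.zero_le _), antitone_snoc h2 (Fin.zero_le _), ?_⟩, ?_⟩
    · intro l
      rcases Fin.eq_castSucc_or_eq_last l with ⟨l0, rfl⟩ | rfl
      · rw [Fin.snoc_castSucc, Fin.snoc_castSucc]
        exact h3 l0
      · rw [Fin.snoc_last, Fin.snoc_last]
    · rw [Fin.snoc_last]
      rfl
  · intro q hq
    simp only [Finset.mem_coe, Finset.mem_filter, mem_PF] at hq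
    obtain ⟨⟨h1, h2, h3⟩, h4⟩ := hq
    have hd : q.1 (Fin.last (m + 1)) = 0 := Fin.ext (by simpa using h4)
    have he : q.2 (Fin.last (m + 1)) = 0 := by
      have := h3 (Fin.last (m + 1))
      rw [hd] at this
      exact le_antisymm this (Fin.zero_le _)
    have e1 : Fin.snoc (Fin.init q.1) (0 : Fin (n + 1)) = q.1 := by
      rw [← hd]; exact Fin.snoc_init_self q.1
    have e2 : Fin.snoc (Fin.init q.2) (0 : Fin (n + 1)) = q.2 := by
      rw [← he]; exact Fin.snoc_init_self q.2
    simp only [Prod.ext_iff]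
    exact ⟨e1, e2⟩
  · intro q _
    simp only [Prod.ext_iff]
    exact ⟨Fin.init_snoc _ _, Fin.init_snoc _ _⟩

lemma BijA (n m j : ℕ) :
    (((PF (n + 1) (m + 2)).filter fun q => (q.1 (Fin.last (m + 1)) : ℕ) = j + 1).filter
        fun q => ¬ (q.2 (Fin.last (m + 1)) : ℕ) = 0).card
      = ((PF n (m + 2)).filter fun q => (q.1 (Fin.last (m + 1)) : ℕ) = j).card := by
  apply Finset.card_nbij'
      (fun q => (fun l => ⟨(q.1 l : ℕ) - 1, by have := (q.1 l).isLt; first | omega | (simp only [Fin.val_mk]; omega)⟩,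
                 fun l => ⟨(q.2 l : ℕ) - 1, by have := (q.2 l).isLt; first | omega | (simp only [Fin.val_mk]; omega)⟩))
      (fun q => (fun l => ⟨(q.1 l : ℕ) + 1, by have := (q.1 l).isLt; first | omega | (simp only [Fin.val_mk]; omega)⟩,
                 fun l => ⟨(q.2 l : ℕ) + 1, by have := (q.2 l).isLt; first | omega | (simp only [Fin.val_mk]; omega)⟩))
  · intro q hq
    simp only [Finset.mem_coe, Finset.mem_filter, mem_PF] at hq
    obtain ⟨⟨⟨h1, h2, h3⟩, h4⟩, _⟩ := hq
    simp only [Finset.mem_coe, Finset.mem_filter, mem_PF]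
    refine ⟨⟨?_, ?_, ?_⟩, ?_⟩
    · intro l l' h
      have := h1 h
      rw [Fin.le_def] at this ⊢
      first | omega | (simp only [Fin.val_mk]; omega)
    · intro l l' h
      have := h2 h
      rw [Fin.le_def] at this ⊢
      first | omega | (simp only [Fin.val_mk]; omega)
    · intro l
      have := h3 l
      rw [Fin.le_def] at this ⊢
      first | omega | (simp only [Fin.val_mk]; omega)
    · first | omega | (simp only [Fin.val_mk]; omega)
  · intro q hq
    simp only [Finset.mem_coe, Finset.mem_filter, mem_PF] at hq
    obtain ⟨⟨h1, h2, h3⟩, h4⟩ := hq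
    simp only [Finset.mem_coe, Finset.mem_filter, mem_PF]
    refine ⟨⟨⟨?_, ?_, ?_⟩, ?_⟩, ?_⟩
    · intro l l' h
      have := h1 h
      rw [Fin.le_def] at this ⊢
      first | omega | (simp only [Fin.val_mk]; omega)
    · intro l l' h
      have := h2 h
      rw [Fin.le_def] at this ⊢
      first | omega | (simp only [Fin.val_mk]; omega)
    · intro l
      have := h3 l
      rw [Fin.le_def] at this ⊢
      first | omega | (simp only [Fin.val_mk]; omega)
    · first | omega | (simp only [Fin.val_mk]; omega)
    · first | omega | (simp only [Fin.val_mk]; omega)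
  · intro q hq
    simp only [Finset.mem_coe, Finset.mem_filter, mem_PF] at hq
    obtain ⟨⟨⟨h1, h2, h3⟩, h4⟩, h5⟩ := hq
    have hd1 : ∀ l, 1 ≤ (q.1 l : ℕ) := by
      intro l
      have := h1 (Fin.le_last l)
      rw [Fin.le_def] at this
      first | omega | (simp only [Fin.val_mk]; omega)
    have he1 : ∀ l, 1 ≤ (q.2 l : ℕ) := by
      intro l
      have := h2 (Fin.le_last l)
      rw [Fin.le_def] at this
      first | omega | (simp only [Fin.val_mk]; omega)
    simp only [Prod.ext_iff]
    constructor
    · funext l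
      apply Fin.ext
      have := hd1 l
      first | omega | (simp only [Fin.val_mk]; omega)
    · funext l
      apply Fin.ext
      have := he1 l
      first | omega | (simp only [Fin.val_mk]; omega)
  · intro q hq
    simp only [Prod.ext_iff]
    constructor
    · funext l
      apply Fin.ext
      first | omega | (simp only [Fin.val_mk]; omega)
    · funext l
      apply Fin.ext
      first | omega | (simp only [Fin.val_mk]; omega)

lemma BijB (n m j : ℕ) (hj : j ≤ n) :
    (((PF (n + 1) (m + 2)).filter fun q => (q.1 (Fin.last (m + 1)) : ℕ) = j + 1).filter
        fun q => (q.2 (Fin.last (m + 1)) : ℕ) = 0).card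
      = ((PF (n + 1) (m + 1)).filter fun q => j + 1 ≤ (q.1 (Fin.last m) : ℕ)).card := by
  apply Finset.card_nbij' (fun q => (Fin.init q.1, Fin.init q.2))
      (fun q => (Fin.snoc q.1 ⟨j + 1, by omega⟩, Fin.snoc q.2 0))
  · intro q hq
    simp only [Finset.mem_coe, Finset.mem_filter, mem_PF] at hq
    obtain ⟨⟨⟨h1, h2, h3⟩, h4⟩, _⟩ := hq
    simp only [Finset.mem_coe, Finset.mem_filter, mem_PF]
    refine ⟨⟨antitone_init h1, antitone_init h2, fun l => h3 _⟩, ?_⟩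
    have hle := h1 (Fin.le_last ((Fin.last m).castSucc))
    rw [Fin.le_def] at hle
    show j + 1 ≤ (q.1 ((Fin.last m).castSucc) : ℕ)
    omega
  · intro q hq
    simp only [Finset.mem_coe, Finset.mem_filter, mem_PF] at hq
    obtain ⟨⟨h1, h2, h3⟩, h4⟩ := hq
    simp only [Finset.mem_coe, Finset.mem_filter, mem_PF]
    refine ⟨⟨⟨antitone_snoc h1 ?_, antitone_snoc h2 (Fin.zero_le _), ?_⟩, ?_⟩, ?_⟩
    · rw [Fin.le_def]
      exact h4
    · intro l
      rcases Fin.eq_castSucc_or_eq_last l with ⟨l0, rfl⟩ | rfl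
      · rw [Fin.snoc_castSucc, Fin.snoc_castSucc]
        exact h3 l0
      · rw [Fin.snoc_last, Fin.snoc_last]
        exact Fin.zero_le _
    · rw [Fin.snoc_last]
    · rw [Fin.snoc_last]
      rfl
  · intro q hq
    simp only [Finset.mem_coe, Finset.mem_filter, mem_PF] at hq
    obtain ⟨⟨⟨h1, h2, h3⟩, h4⟩, h5⟩ := hq
    have hd : q.1 (Fin.last (m + 1)) = ⟨j + 1, by omega⟩ := Fin.ext (by simpa using h4)
    have he : q.2 (Fin.last (m + 1)) = 0 := Fin.ext (by simpa using h5)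
    have e1 : Fin.snoc (Fin.init q.1) (⟨j + 1, by omega⟩ : Fin (n + 2)) = q.1 := by
      rw [← hd]; exact Fin.snoc_init_self q.1
    have e2 : Fin.snoc (Fin.init q.2) (0 : Fin (n + 2)) = q.2 := by
      rw [← he]; exact Fin.snoc_init_self q.2
    simp only [Prod.ext_iff]
    exact ⟨e1, e2⟩
  · intro q _
    simp only [Prod.ext_iff]
    exact ⟨Fin.init_snoc _ _, Fin.init_snoc _ _⟩

lemma M3 (n m j : ℕ) (hj : j ≤ n) :
    ((PF (n + 1) (m + 2)).filter fun q => (q.1 (Fin.last (m + 1)) : ℕ) = j + 1).card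
      = ((PF n (m + 2)).filter fun q => (q.1 (Fin.last (m + 1)) : ℕ) = j).card
        + ((PF (n + 1) (m + 1)).filter fun q => j + 1 ≤ (q.1 (Fin.last m) : ℕ)).card := by
  rw [← BijA n m j, ← BijB n m j hj]
  have h := Finset.card_filter_add_card_filter_not
    (s := (PF (n + 1) (m + 2)).filter fun q => (q.1 (Fin.last (m + 1)) : ℕ) = j + 1)
    (p := fun q => (q.2 (Fin.last (m + 1)) : ℕ) = 0)
  omega

lemma term2 (n' m j : ℕ) :
    ((PF n' (m + 1)).filter fun q => j ≤ (q.1 (Fin.last m) : ℕ)).card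
      = ∑ i ∈ Finset.Icc j n',
          ((PF n' (m + 1)).filter fun q => (q.1 (Fin.last m) : ℕ) = i).card := by
  rw [Finset.card_eq_sum_card_fiberwise
    (f := fun q => (q.1 (Fin.last m) : ℕ)) (t := Finset.Icc j n')
    (fun q hq => by
      simp only [Finset.mem_coe, Finset.mem_filter] at hq
      simp only [Finset.mem_coe, Finset.mem_Icc]
      have := (q.1 (Fin.last m)).isLt
      omega)]
  apply Finset.sum_congr rfl
  intro i hi
  simp only [Finset.mem_Icc] at hi
  congr 1
  rw [Finset.filter_filter]
  apply Finset.filter_congr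
  intro q _
  constructor
  · rintro ⟨_, h⟩; exact h
  · intro h; exact ⟨by omega, h⟩

lemma icc_eq_filter (j N : ℕ) :
    Finset.Icc (j + 1) N = (Finset.range (N + 1)).filter fun i => j + 1 ≤ i := by
  ext i
  simp only [Finset.mem_Icc, Finset.mem_filter, Finset.mem_range]
  omega

/-- For all `n ≥ 1` and `k ≥ 2`: `a_0(C_n×C_k) = h(C_n×C_{k−1})`;
`a_j(C_n×C_k) = a_{j−1}(C_{n−1}×C_k) + ∑_{i=j}^n a_i(C_n×C_{k−1})` for `1 ≤ j ≤ n`;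
and `h(C_n×C_k) = h(C_{n−1}×C_k) + ∑_{i=0}^n (i+1)·a_i(C_n×C_{k−1})`,
where `h(P)` denotes the number of monotone maps from `P` to the chain `C₃`. -/
theorem stmt11 :
    ∀ n k : ℕ, 1 ≤ n → 2 ≤ k →
      aCC n k 0 = Nat.card ((Fin n × Fin (k - 1)) →o Fin 3)
      ∧ (∀ j : ℕ, 1 ≤ j → j ≤ n →
          aCC n k j = aCC (n - 1) k (j - 1) + ∑ i ∈ Finset.Icc j n, aCC n (k - 1) i)
      ∧ Nat.card ((Fin n × Fin k) →o Fin 3)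
          = Nat.card ((Fin (n - 1) × Fin k) →o Fin 3)
            + ∑ i ∈ Finset.range (n + 1), (i + 1) * aCC n (k - 1) i := by
  intro n k hn hk
  obtain ⟨nn, rfl⟩ : ∃ nn, n = nn + 1 := ⟨n - 1, by omega⟩
  obtain ⟨m, rfl⟩ : ∃ m, k = m + 2 := ⟨k - 2, by omega⟩
  have hk1 : m + 2 - 1 = m + 1 := rfl
  have hn1 : nn + 1 - 1 = nn := rfl
  refine ⟨?_, ?_, ?_⟩
  · -- a_0 = h(C_n × C_{k-1})
    rw [hk1, aCC_eq_card (nn + 1) (m + 1) 0 (by omega), M1, hcard]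
  · intro j hj1 hjn
    obtain ⟨jj, rfl⟩ : ∃ jj, j = jj + 1 := ⟨j - 1, by omega⟩
    have hjj : jj ≤ nn := by omega
    rw [hk1, hn1, Nat.add_sub_cancel]
    rw [aCC_eq_card (nn + 1) (m + 1) (jj + 1) (by omega)]
    rw [M3 nn m jj hjj]
    rw [aCC_eq_card nn (m + 1) jj (by omega)]
    congr 1
    rw [term2 (nn + 1) m (jj + 1)]
    apply Finset.sum_congr rfl
    intro i hi
    simp only [Finset.mem_Icc] at hi
    rw [aCC_eq_card (nn + 1) m i (by omega)]
  · rw [hk1, hn1]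
    -- abbreviations
    set A : ℕ → ℕ := fun i =>
      ((PF (nn + 1) (m + 1)).filter fun q => (q.1 (Fin.last m) : ℕ) = i).card with hA
    set B : ℕ → ℕ := fun j =>
      ((PF (nn + 1) (m + 2)).filter fun q => (q.1 (Fin.last (m + 1)) : ℕ) = j).card with hB
    set C : ℕ → ℕ := fun j =>
      ((PF nn (m + 2)).filter fun q => (q.1 (Fin.last (m + 1)) : ℕ) = j).card with hC
    have hL : Nat.card ((Fin (nn + 1) × Fin (m + 2)) →o Fin 3)
        = ∑ j ∈ Finset.range (nn + 2), B j := by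
      rw [hcard, M2 (nn + 1) (m + 1)]
    have hR : Nat.card ((Fin nn × Fin (m + 2)) →o Fin 3)
        = ∑ j ∈ Finset.range (nn + 1), C j := by
      rw [hcard, M2 nn (m + 1)]
    have haCC : ∀ i ∈ Finset.range (nn + 2), aCC (nn + 1) (m + 1) i = A i := by
      intro i hi
      simp only [Finset.mem_range] at hi
      rw [aCC_eq_card (nn + 1) m i (by omega), hA]
    have hB0 : B 0 = ∑ i ∈ Finset.range (nn + 2), A i := by
      rw [hB]
      simp only
      rw [M1 (nn + 1) m, M2 (nn + 1) m]
    have hBsucc : ∀ j ≤ nn, B (j + 1)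
        = C j + ∑ i ∈ Finset.range (nn + 2), (if j + 1 ≤ i then A i else 0) := by
      intro j hjle
      rw [hB, hC]
      simp only
      rw [M3 nn m j hjle, term2 (nn + 1) m (j + 1), icc_eq_filter j (nn + 1),
        Finset.sum_filter]
    rw [hL, hR, Finset.sum_range_succ']
    have hBs : ∑ j ∈ Finset.range (nn + 1), B (j + 1)
        = ∑ j ∈ Finset.range (nn + 1),
            (C j + ∑ i ∈ Finset.range (nn + 2), (if j + 1 ≤ i then A i else 0)) := by
      apply Finset.sum_congr rfl
      intro j hj
      simp only [Finset.mem_range] at hj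
      exact hBsucc j (by omega)
    rw [hBs, hB0, Finset.sum_add_distrib]
    have hswap : ∑ j ∈ Finset.range (nn + 1),
        ∑ i ∈ Finset.range (nn + 2), (if j + 1 ≤ i then A i else 0)
        = ∑ i ∈ Finset.range (nn + 2), i * A i := by
      rw [Finset.sum_comm]
      apply Finset.sum_congr rfl
      intro i hi
      simp only [Finset.mem_range] at hi
      have : ∑ j ∈ Finset.range (nn + 1), (if j + 1 ≤ i then A i else 0)
          = ((Finset.range (nn + 1)).filter fun j => j + 1 ≤ i).card * A i := by
        rw [← Finset.sum_filter, Finset.sum_const, smul_eq_mul]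
      rw [this]
      have hcardi : ((Finset.range (nn + 1)).filter fun j => j + 1 ≤ i).card = i := by
        have he : ((Finset.range (nn + 1)).filter fun j => j + 1 ≤ i)
            = Finset.range i := by
          ext j
          simp only [Finset.mem_filter, Finset.mem_range]
          omega
        rw [he, Finset.card_range]
      rw [hcardi]
    rw [hswap]
    have hfinal : ∀ i ∈ Finset.range (nn + 2),
        (i + 1) * aCC (nn + 1) (m + 1) i = A i + i * A i := by
      intro i hi
      rw [haCC i hi]
      ring
    rw [Finset.sum_congr rfl hfinal, Finset.sum_add_distrib]
    ring
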